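/- arXiv:1706.10268 — 3 statements merged into one kernel-verified Lean document; each statement's English description precedes it below -/
import Mathlib

section
/- For a nonzero polynomial g over the finite field F_p of total degree at most d in n variables, the probability that g vanishes at a uniformly random point of F_p^n is at most nd/p (Schwartz-Zippel, the basis of sum-check soundness). -/
open MvPolynomial Finset

lemma sz_aux (p : ℕ) [Fact p.Prime] : ∀ (n d : ℕ)
    (g : MvPolynomial (Fin n) (ZMod p)), g ≠ 0 →
    (∀ i : Fin n, MvPolynomial.degreeOf i g ≤ d) →
    (Finset.univ.filter fun x : Fin n → ZMod p => MvPolynomial.eval x g = 0).card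
      ≤ n * d * p ^ (n - 1) := by
  intro n
  induction n with
  | zero =>
    intro d g hg _
    have h : ∀ x : Fin 0 → ZMod p, eval x g ≠ 0 := by
      intro x hx
      apply hg
      apply (isEmptyAlgEquiv (ZMod p) (Fin 0)).injective
      have hx0 : x = (IsEmpty.elim (by infer_instance)) := Subsingleton.elim _ _
      rw [eq_C_of_isEmpty g, eval_C] at hx
      rw [eq_C_of_isEmpty g, hx, C_0]
    simp [Finset.filter_eq_empty_iff.2 fun {x} _ => h x]
  | succ n ih =>
    intro d g hg hdeg
    set q := finSuccEquiv (ZMod p) n g with hq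
    have hq0 : q ≠ 0 := by
      simpa [hq] using (map_ne_zero_iff _ (finSuccEquiv (ZMod p) n).injective).2 hg
    set k := q.natDegree with hk
    have hkd : k ≤ d := by
      rw [hk, natDegree_finSuccEquiv]
      exact hdeg 0
    set c := q.coeff k with hc
    have hc0 : c ≠ 0 := Polynomial.leadingCoeff_ne_zero.2 hq0
    have hcdeg : ∀ j : Fin n, degreeOf j c ≤ d := fun j =>
      (degreeOf_coeff_finSuccEquiv g j k).trans (hdeg j.succ)
    have hIH := ih d c hc0 hcdeg
    -- transfer to product type
    have hcard : (Finset.univ.filter fun x : Fin (n+1) → ZMod p => eval x g = 0).card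
        = (Finset.univ.filter fun z : ZMod p × (Fin n → ZMod p) =>
            eval (Fin.cons z.1 z.2) g = 0).card := by
      refine Finset.card_bij' (fun x _ => (x 0, Fin.tail x)) (fun z _ => Fin.cons z.1 z.2)
        ?_ ?_ ?_ ?_
      · intro x hx
        simp only [Finset.mem_filter, Finset.mem_univ, true_and] at hx ⊢
        simpa [Fin.cons_self_tail] using hx
      · intro z hz
        simp only [Finset.mem_filter, Finset.mem_univ, true_and] at hz ⊢
        exact hz
      · intro x _; simp [Fin.cons_self_tail]
      · intro z _; simp
    rw [hcard]
    have hsum : (Finset.univ.filter fun z : ZMod p × (Fin n → ZMod p) =>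
            eval (Fin.cons z.1 z.2) g = 0).card
        = ∑ s : Fin n → ZMod p, (Finset.univ.filter fun y : ZMod p =>
            eval (Fin.cons y s) g = 0).card := by
      rw [Finset.card_filter, Fintype.sum_prod_type_right]
      exact Finset.sum_congr rfl fun s _ => (Finset.card_filter _ _).symm
    rw [hsum]
    have hbound : ∀ s : Fin n → ZMod p,
        (Finset.univ.filter fun y : ZMod p => eval (Fin.cons y s) g = 0).card
          ≤ if eval s c = 0 then p else d := by
      intro s
      by_cases hs : eval s c = 0
      · simp only [hs, if_pos rfl]
        calc _ ≤ (Finset.univ : Finset (ZMod p)).card := Finset.card_filter_le _ _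
        _ = p := by simp
      · simp only [if_neg hs]
        have hmap : (q.map (eval s)) ≠ 0 := fun h => hs (by
          have := congrArg (fun r => Polynomial.coeff r k) h
          simpa [Polynomial.coeff_map, ← hc] using this)
        have hsub : (Finset.univ.filter fun y : ZMod p => eval (Fin.cons y s) g = 0)
            ⊆ (q.map (eval s)).roots.toFinset := by
          intro y hy
          simp only [Finset.mem_filter, Finset.mem_univ, true_and] at hy
          rw [eval_eq_eval_mv_eval', ← hq] at hy
          simp [Polynomial.mem_roots, hmap, Polynomial.IsRoot, hy, ← hq]
        calc _ ≤ (q.map (eval s)).roots.toFinset.card := Finset.card_le_card hsub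
        _ ≤ Multiset.card (q.map (eval s)).roots := Multiset.toFinset_card_le _
        _ ≤ (q.map (eval s)).natDegree := Polynomial.card_roots' _
        _ ≤ q.natDegree := Polynomial.natDegree_map_le
        _ ≤ d := hkd
    calc ∑ s : Fin n → ZMod p, (Finset.univ.filter fun y : ZMod p =>
            eval (Fin.cons y s) g = 0).card
        ≤ ∑ s : Fin n → ZMod p, (if eval s c = 0 then p else d) :=
          Finset.sum_le_sum fun s _ => hbound s
      _ = p * (Finset.univ.filter fun s : Fin n → ZMod p => eval s c = 0).card
          + d * (Finset.univ.filter fun s : Fin n → ZMod p => ¬ eval s c = 0).card := by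
          rw [Finset.sum_ite, Finset.sum_const, Finset.sum_const]
          ring
      _ ≤ p * (n * d * p ^ (n - 1)) + d * p ^ n := by
          gcongr
          calc (Finset.univ.filter fun s : Fin n → ZMod p => ¬ eval s c = 0).card
              ≤ (Finset.univ : Finset (Fin n → ZMod p)).card := Finset.card_filter_le _ _
            _ = p ^ n := by simp [ZMod.card]
      _ ≤ (n + 1) * d * p ^ ((n + 1) - 1) := by
          cases n with
          | zero => simp
          | succ m =>
            have h1 : p * ((m+1) * d * p ^ (m + 1 - 1)) = (m+1) * d * p ^ (m+1) := by
              simp only [Nat.add_sub_cancel]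
              ring
            rw [h1]
            simp only [Nat.add_sub_cancel]
            ring_nf
            omega

/-- **Schwartz–Zippel (sum-check soundness basis).**
For a nonzero polynomial `g` over `F_p` in `n` variables with degree at most `d`
in each variable (so total degree at most `n*d`), the number of points of `F_p^n`
where `g` vanishes is at most `n*d*p^(n-1)`; i.e., the probability that `g`
vanishes at a uniformly random point of `F_p^n` is at most `n*d/p`. -/
theorem schwartz_zippel_sumcheck (p : ℕ) [Fact p.Prime] (n d : ℕ)
    (g : MvPolynomial (Fin n) (ZMod p)) (hg : g ≠ 0)
    (hdeg : ∀ i : Fin n, MvPolynomial.degreeOf i g ≤ d) :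
    (Finset.univ.filter fun x : Fin n → ZMod p => MvPolynomial.eval x g = 0).card
      ≤ n * d * p ^ (n - 1) := by
  exact sz_aux p n d g hg hdeg
end

section
/- If Z = W · Y is a matrix product over a field F with W an n_{i+1} × n_i matrix and Y an n_i × b matrix (with n_i, b powers of two), then the multilinear extension satisfies Z̃(q, r) = Σ_{j ∈ {0,1}^{log n_i}} W̃(q, j) · Ỹ(j, r) for all q ∈ F^{log n_{i+1}} and r ∈ F^{log b}. -/
/-- Boolean vectors viewed as field elements via `0 ↦ 0`, `1 ↦ 1`. -/
def boolToField {F : Type*} [CommRing F] {n : ℕ} (t : Fin n → Bool) : Fin n → F :=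
  fun i => if t i then 1 else 0

/-- The Lagrange basis factor `Π_i ((1 - x_i)(1 - t_i) + x_i t_i)`. -/
def chi {F : Type*} [CommRing F] {n : ℕ} (x : Fin n → F) (t : Fin n → Bool) : F :=
  ∏ i : Fin n, ((1 - x i) * (1 - boolToField t i) + x i * boolToField t i)

/-- Multilinear extension of a matrix `A : {0,1}^m × {0,1}^k → F` (a `2^m × 2^k`
matrix with rows and columns indexed by bit-strings), evaluated at
`(x, y) ∈ F^m × F^k`. -/
def mle2 {F : Type*} [CommRing F] {m k : ℕ}
    (A : (Fin m → Bool) → (Fin k → Bool) → F)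
    (x : Fin m → F) (y : Fin k → F) : F :=
  ∑ t : Fin m → Bool, ∑ u : Fin k → Bool, chi x t * chi y u * A t u

lemma chi_bool {F : Type*} [CommRing F] {n : ℕ} (j u : Fin n → Bool) :
    chi (F := F) (boolToField j) u = if j = u then 1 else 0 := by
  unfold chi
  have h : ∀ i : Fin n,
      ((1 - boolToField (F := F) j i) * (1 - boolToField u i)
        + boolToField j i * boolToField u i) = if j i = u i then 1 else 0 := by
    intro i
    unfold boolToField
    cases j i <;> cases u i <;> simp
  simp only [h]
  by_cases hju : j = u
  · subst hju; simp
  · rw [if_neg hju]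
    obtain ⟨i, hi⟩ := Function.ne_iff.mp hju
    exact Finset.prod_eq_zero (Finset.mem_univ i) (by simp [hi])

lemma sum_comm₃ {M : Type*} [AddCommMonoid M] {α β γ : Type*}
    [Fintype α] [Fintype β] [Fintype γ] (f : α → β → γ → M) :
    ∑ x : α, ∑ y : β, ∑ z : γ, f x y z = ∑ z : γ, ∑ y : β, ∑ x : α, f x y z := by
  calc ∑ x : α, ∑ y : β, ∑ z : γ, f x y z
      = ∑ x : α, ∑ z : γ, ∑ y : β, f x y z :=
        Finset.sum_congr rfl fun x _ => Finset.sum_comm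
    _ = ∑ z : γ, ∑ x : α, ∑ y : β, f x y z := Finset.sum_comm
    _ = ∑ z : γ, ∑ y : β, ∑ x : α, f x y z :=
        Finset.sum_congr rfl fun z _ => Finset.sum_comm

/-- **Thaler's sum-check identity for matrix multiplication.**
If `Z = W · Y` with `W` a `2^a × 2^c` matrix and `Y` a `2^c × 2^e` matrix over a
field `F`, then for all `q ∈ F^a` and `r ∈ F^e`:
`Z̃(q, r) = Σ_{j ∈ {0,1}^c} W̃(q, j) · Ỹ(j, r)`. -/
theorem mle_matrix_mul {F : Type*} [Field F] {a c e : ℕ}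
    (W : (Fin a → Bool) → (Fin c → Bool) → F)
    (Y : (Fin c → Bool) → (Fin e → Bool) → F)
    (Z : (Fin a → Bool) → (Fin e → Bool) → F)
    (hZ : ∀ t u, Z t u = ∑ j : Fin c → Bool, W t j * Y j u)
    (q : Fin a → F) (r : Fin e → F) :
    mle2 Z q r = ∑ j : Fin c → Bool,
      mle2 W q (boolToField j) * mle2 Y (boolToField j) r := by
  have hW : ∀ j : Fin c → Bool, mle2 W q (boolToField j)
      = ∑ t : Fin a → Bool, chi q t * W t j := by
    intro j
    unfold mle2
    refine Finset.sum_congr rfl fun t _ => ?_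
    rw [Finset.sum_eq_single j]
    · rw [chi_bool]; simp
    · intro u _ hu; rw [chi_bool, if_neg (Ne.symm hu)]; ring
    · simp
  have hY : ∀ j : Fin c → Bool, mle2 Y (boolToField j) r
      = ∑ u : Fin e → Bool, chi r u * Y j u := by
    intro j
    unfold mle2
    rw [Finset.sum_eq_single j]
    · refine Finset.sum_congr rfl fun u _ => ?_
      rw [chi_bool]; simp
    · intro t _ ht
      refine Finset.sum_eq_zero fun u _ => ?_
      rw [chi_bool, if_neg (Ne.symm ht)]; ring
    · simp
  rw [Finset.sum_congr rfl fun j _ => by rw [hW, hY]]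
  simp only [mle2, hZ, Finset.sum_mul, Finset.mul_sum]
  rw [sum_comm₃ (fun j u t => chi q t * W t j * (chi r u * Y j u))]
  refine Finset.sum_congr rfl fun t _ => Finset.sum_congr rfl fun u _ =>
    Finset.sum_congr rfl fun j _ => ?_
  ring
end

section
/- (Sum-check soundness, one round) Let g be a polynomial over F_p of degree at most d in its first variable. If a claimed value y does not equal Σ_{x_1 ∈ {0,1}} H(x_1), where H(X) := Σ_{x_2,...,x_n ∈ {0,1}} g(X, x_2,...,x_n), then for any polynomial h of degree at most d with h(0) + h(1) = y, the probability over uniformly random q ∈ F_p that h(q) = H(q) is at most d/p. -/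
open MvPolynomial

/-- **Sum-check soundness, one round.** Let `g` be a polynomial over `F_p` of
degree at most `d` in its first variable and let
`H(X) := Σ_{x_2,…,x_n ∈ {0,1}} g(X, x_2, …, x_n)` be the true partial-sum
polynomial. If a claimed value `y` differs from `H(0) + H(1)`, then for any
polynomial `h` of degree at most `d` with `h(0) + h(1) = y`, the number of
`q ∈ F_p` with `h(q) = H(q)` is at most `d`; i.e., the check passes at a
uniformly random `q` with probability at most `d/p`. -/
theorem sumcheck_round_soundness (p : ℕ) [Fact p.Prime] {n d : ℕ}
    (g : MvPolynomial (Fin (n + 1)) (ZMod p))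
    (hg : MvPolynomial.degreeOf 0 g ≤ d)
    (H : Polynomial (ZMod p))
    (hH : ∀ X : ZMod p, H.eval X =
      ∑ rest : Fin n → Bool,
        MvPolynomial.eval (Fin.cons X (boolToField rest)) g)
    (y : ZMod p) (hy : y ≠ H.eval 0 + H.eval 1)
    (h : Polynomial (ZMod p)) (hdeg : h.degree ≤ d)
    (hcheck : h.eval 0 + h.eval 1 = y) :
    (Finset.univ.filter fun q : ZMod p => h.eval q = H.eval q).card ≤ d := by
  classical
  -- the true partial-sum polynomial, of degree ≤ d
  set S : Polynomial (ZMod p) :=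
    ∑ rest : Fin n → Bool,
      Polynomial.map (MvPolynomial.eval (boolToField rest))
        (MvPolynomial.finSuccEquiv (ZMod p) n g) with hS
  have hSeval : ∀ X : ZMod p, S.eval X =
      ∑ rest : Fin n → Bool,
        MvPolynomial.eval (Fin.cons X (boolToField rest)) g := by
    intro X
    rw [hS, Polynomial.eval_finset_sum]
    exact Finset.sum_congr rfl fun rest _ =>
      (MvPolynomial.eval_eq_eval_mv_eval' (boolToField rest) X g).symm
  have hSdeg : S.degree ≤ d := by
    refine (Polynomial.degree_sum_le _ _).trans (Finset.sup_le fun rest _ => ?_)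
    refine le_trans (Polynomial.degree_map_le) ?_
    refine le_trans Polynomial.degree_le_natDegree ?_
    rw [MvPolynomial.natDegree_finSuccEquiv]
    exact_mod_cast hg
  have hne : h - S ≠ 0 := by
    intro h0
    have : h = S := sub_eq_zero.mp h0
    apply hy
    rw [← hcheck, this, hSeval 0, hSeval 1, hH 0, hH 1]
  have hdegsub : (h - S).natDegree ≤ d := by
    have := Polynomial.degree_sub_le h S
    have hle : (h - S).degree ≤ d := le_trans this (max_le hdeg hSdeg)
    exact Polynomial.natDegree_le_iff_degree_le.mpr hle
  have hsub : (Finset.univ.filter fun q : ZMod p => h.eval q = H.eval q)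
      ⊆ (h - S).roots.toFinset := by
    intro q hq
    simp only [Finset.mem_filter] at hq
    rw [Multiset.mem_toFinset, Polynomial.mem_roots hne]
    rw [Polynomial.IsRoot, Polynomial.eval_sub, sub_eq_zero, hq.2, hH q, hSeval q]
  calc (Finset.univ.filter fun q : ZMod p => h.eval q = H.eval q).card
      ≤ (h - S).roots.toFinset.card := Finset.card_le_card hsub
    _ ≤ Multiset.card (h - S).roots := Multiset.toFinset_card_le _
    _ ≤ (h - S).natDegree := Polynomial.card_roots' _
    _ ≤ d := hdegsub
end
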